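/- Let ℋ : ℝ^{N_ξ} → ℝ^{N_z} be any map, let Γ_ℋ ∈ ℝ^{N_z×N_z} be symmetric positive definite, let z ∈ ℝ^{N_z}, and let {ξ₀^(j)}_{j=1}^{J} ⊂ ℝ^{N_ξ} with J ≥ 2 be an initial ensemble. Define recursively, for n ≥ 0: ξ̄_n = (1/J)Σ_j ξ_n^(j), τ_n^(j) = ξ_n^(j) − ξ̄_n, ℋ̄_n = (1/J)Σ_j ℋ(ξ_n^(j)), C_n^{zz} = (1/(J−1)) Σ_j (ℋ(ξ_n^(j)) − ℋ̄_n)(ℋ(ξ_n^(j)) − ℋ̄_n)ᵀ, C_n^{ξz} = (1/(J−1)) Σ_j τ_n^(j)(ℋ(ξ_n^(j)) − ℋ̄_n)ᵀ, and ξ_{n+1}^(j) = ξ_n^(j) + C_n^{ξz}(C_n^{zz} + Γ_ℋ)⁻¹(z − ℋ(ξ_n^(j))). Then C_n^{zz} + Γ_ℋ is invertible for every n, and for every n ≥ 0 and every j, the iterate ξ_n^(j) lies in the subspace A = span{ξ₀^(1), …, ξ₀^(J)} spanned by the initial ensemble (subspace property of ensemble Kalman inversion). -/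

import Mathlib

open Matrix BigOperators

lemma eki_vecMulVec_mulVec {m n : Type*} [Fintype n] (a : m → ℝ) (b : n → ℝ) (x : n → ℝ) :
    (vecMulVec a b).mulVec x = (b ⬝ᵥ x) • a := by
  ext i
  simp only [mulVec, vecMulVec_apply, dotProduct, Pi.smul_apply, smul_eq_mul, Finset.mul_sum]
  rw [Finset.sum_mul]
  exact Finset.sum_congr rfl fun j _ => by ring

lemma eki_sum_mulVec {ι m n : Type*} [Fintype n] (s : Finset ι) (M : ι → Matrix m n ℝ)
    (x : n → ℝ) : (∑ j ∈ s, M j) *ᵥ x = ∑ j ∈ s, (M j) *ᵥ x := by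
  ext i
  simp only [mulVec, dotProduct, Finset.sum_apply, Matrix.sum_apply, Finset.sum_mul]
  rw [Finset.sum_comm]

lemma eki_dot_sum {ι n : Type*} [Fintype n] (s : Finset ι) (x : n → ℝ) (f : ι → n → ℝ) :
    x ⬝ᵥ ∑ j ∈ s, f j = ∑ j ∈ s, x ⬝ᵥ f j := by
  simp only [dotProduct, Finset.sum_apply, Finset.mul_sum]
  rw [Finset.sum_comm]

lemma eki_psd {J Nz : ℕ} (c : ℝ) (hc : 0 ≤ c) (v : Fin J → Fin Nz → ℝ) :
    (c • ∑ j, vecMulVec (v j) (v j)).PosSemidef := by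
  rw [posSemidef_iff_dotProduct_mulVec]
  constructor
  · unfold Matrix.IsHermitian
    ext i k
    simp only [conjTranspose_apply, Matrix.smul_apply, Matrix.sum_apply, vecMulVec_apply,
      star_trivial, smul_eq_mul]
    congr 1
    exact Finset.sum_congr rfl fun j _ => mul_comm _ _
  · intro x
    have hx : star x = x := by simp
    rw [hx, smul_mulVec, eki_sum_mulVec, dotProduct_smul]
    refine smul_nonneg hc ?_
    rw [eki_dot_sum]
    refine Finset.sum_nonneg fun j _ => ?_
    rw [eki_vecMulVec_mulVec, dotProduct_smul]
    have : x ⬝ᵥ v j = v j ⬝ᵥ x := dotProduct_comm _ _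
    simp only [smul_eq_mul, this]
    exact mul_self_nonneg _

/-- Subspace property of ensemble Kalman inversion: `Cₙᶻᶻ + Γ_ℋ` is invertible
at every iteration, and every iterate stays in the span of the initial ensemble. -/
theorem eki_subspace_property {J Nξ Nz : ℕ} (hJ : 2 ≤ J)
    (ℋ : (Fin Nξ → ℝ) → Fin Nz → ℝ)
    (Γℋ : Matrix (Fin Nz) (Fin Nz) ℝ) (hΓℋ : Γℋ.PosDef)
    (z : Fin Nz → ℝ)
    (ξ : ℕ → Fin J → Fin Nξ → ℝ)
    (ξbar : ℕ → Fin Nξ → ℝ) (hξbar : ∀ n, ξbar n = (J : ℝ)⁻¹ • ∑ j, ξ n j)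
    (ℋbar : ℕ → Fin Nz → ℝ) (hℋbar : ∀ n, ℋbar n = (J : ℝ)⁻¹ • ∑ j, ℋ (ξ n j))
    (Czz : ℕ → Matrix (Fin Nz) (Fin Nz) ℝ)
    (hCzz : ∀ n, Czz n
      = ((J : ℝ) - 1)⁻¹ • ∑ j, vecMulVec (ℋ (ξ n j) - ℋbar n) (ℋ (ξ n j) - ℋbar n))
    (Cξz : ℕ → Matrix (Fin Nξ) (Fin Nz) ℝ)
    (hCξz : ∀ n, Cξz n
      = ((J : ℝ) - 1)⁻¹ • ∑ j, vecMulVec (ξ n j - ξbar n) (ℋ (ξ n j) - ℋbar n))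
    (hstep : ∀ n j, ξ (n + 1) j
      = ξ n j + (Cξz n).mulVec ((Czz n + Γℋ)⁻¹.mulVec (z - ℋ (ξ n j)))) :
    (∀ n, IsUnit (Czz n + Γℋ)) ∧
    ∀ n j, ξ n j ∈ Submodule.span ℝ (Set.range (ξ 0)) := by
  have hc : (0:ℝ) ≤ ((J : ℝ) - 1)⁻¹ := by
    have : (1:ℝ) ≤ (J:ℝ) := by exact_mod_cast Nat.one_le_of_lt hJ
    have : (0:ℝ) ≤ (J:ℝ) - 1 := by linarith
    positivity
  refine ⟨fun n => ?_, ?_⟩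
  · have hpsd : (Czz n).PosSemidef := by
      rw [hCzz n]; exact eki_psd _ hc _
    exact (Matrix.PosDef.posSemidef_add hpsd hΓℋ).isUnit
  · set A := Submodule.span ℝ (Set.range (ξ 0)) with hA
    intro n
    induction n with
    | zero => exact fun j => Submodule.subset_span ⟨j, rfl⟩
    | succ n ih =>
      intro j
      have hbar : ξbar n ∈ A := by
        rw [hξbar n]
        exact A.smul_mem _ (A.sum_mem fun k _ => ih k)
      rw [hstep n j, hCξz n]
      refine A.add_mem (ih j) ?_
      rw [smul_mulVec, eki_sum_mulVec]
      refine A.smul_mem _ (A.sum_mem fun k _ => ?_)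
      rw [eki_vecMulVec_mulVec]
      exact A.smul_mem _ (A.sub_mem (ih k) hbar)
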